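/- The formal power series G(x) = ∑_{n≥0} P_n^2 x^n over ℚ satisfies (1+x)(1−6x+x^2) · G(x) = x(1−x). -/

import Mathlib

open PowerSeries

def pell : ℕ → ℚ
  | 0 => 0
  | 1 => 1
  | n + 2 => 2 * pell (n + 1) + pell n

lemma pell_key (n : ℕ) :
    pell (n + 3) ^ 2 = 5 * pell (n + 2) ^ 2 + 5 * pell (n + 1) ^ 2 - pell n ^ 2 := by
  show pell (n + 1 + 2) ^ 2 = 5 * pell (n + 2) ^ 2 + 5 * pell (n + 1) ^ 2 - pell n ^ 2
  rw [pell, show pell (n + 2) = 2 * pell (n + 1) + pell n from rfl]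
  ring

theorem pell_sq_genfun :
    (1 + X) * (1 - 6 * X + X ^ 2) * PowerSeries.mk (fun n => pell n ^ 2)
      = X * (1 - X) := by
  set f : ℚ⟦X⟧ := PowerSeries.mk (fun n => pell n ^ 2) with hf
  have h5 : (5 : ℚ⟦X⟧) = C (R := ℚ) 5 := (map_ofNat (C (R := ℚ)) 5).symm
  have expand : (1 + X) * (1 - 6 * X + X ^ 2) * f
      = f - X ^ 1 * (C (R := ℚ) 5 * f) - X ^ 2 * (C (R := ℚ) 5 * f) + X ^ 3 * f := by
    rw [← h5]; ring
  have hrhs : (X * (1 - X) : ℚ⟦X⟧) = X ^ 1 * 1 - X ^ 2 * 1 := by ring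
  rw [expand, hrhs]
  ext n
  simp only [map_sub, map_add, coeff_X_pow_mul', coeff_C_mul, mul_one]
  match n with
  | 0 => simp [hf, pell]
  | 1 => simp [hf, pell, coeff_X_pow]
  | 2 => norm_num [hf, pell, coeff_X_pow, PowerSeries.coeff_X]
  | (n + 3) =>
    have h1 : (1:ℕ) ≤ n + 3 := by omega
    have h2 : (2:ℕ) ≤ n + 3 := by omega
    have h3 : (3:ℕ) ≤ n + 3 := by omega
    simp only [h1, h2, h3, if_true, hf, coeff_mk, coeff_one]
    have e1 : n + 3 - 1 = n + 2 := by omega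
    have e2 : n + 3 - 2 = n + 1 := by omega
    have e3 : n + 3 - 3 = n := by omega
    rw [e1, e2, e3, pell_key n]
    simp [PowerSeries.coeff_X, coeff_X_pow]
    ring
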